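/- Let γ ∈ (0,1) and let (Y_i)_{i≥1} be a sequence of i.i.d. positive random variables such that there exist C_0 > 0 and x_0 > 0 with P(Y_1 > x) ≤ C_0·x^{−γ} for all x ≥ x_0. Then there exists a constant c < ∞ such that for all n ≥ 1 and all x > 0, P(Y_1 + … + Y_n > x) ≤ c·n·x^{−γ}. -/

import Mathlib

open MeasureTheory ProbabilityTheory Filter
open scoped ENNReal NNReal

lemma my_ofReal_sum_le {ι : Type*} (s : Finset ι) (f : ι → ℝ) :
    ENNReal.ofReal (∑ i ∈ s, f i) ≤ ∑ i ∈ s, ENNReal.ofReal (f i) := by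
  classical
  induction s using Finset.cons_induction with
  | empty => simp
  | cons a s ha ih =>
    rw [Finset.sum_cons, Finset.sum_cons]
    exact (ENNReal.ofReal_add_le).trans (by gcongr)

/-- If `(Y_i)` are i.i.d. positive random variables with `P(Y_1 > x) ≤ C₀ x^{-γ}` for
`x ≥ x₀`, where `γ ∈ (0,1)`, then there is a constant `c` with
`P(Y_1 + … + Y_n > x) ≤ c n x^{-γ}` for all `n ≥ 1` and all `x > 0`. -/
theorem sum_iid_positive_tail_bound
    {Ω : Type*} [MeasurableSpace Ω] (P : Measure Ω) [IsProbabilityMeasure P]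
    (γ : ℝ) (hγ0 : 0 < γ) (hγ1 : γ < 1)
    (Y : ℕ → Ω → ℝ) (hmeas : ∀ i, Measurable (Y i))
    (hindep : iIndepFun Y P)
    (hident : ∀ i, P.map (Y i) = P.map (Y 0))
    (hpos : ∀ i, ∀ᵐ ω ∂P, 0 < Y i ω)
    (C₀ x₀ : ℝ) (hC₀ : 0 < C₀) (hx₀ : 0 < x₀)
    (htail : ∀ x : ℝ, x₀ ≤ x → (P {ω | x < Y 0 ω}).toReal ≤ C₀ * x ^ (-γ)) :
    ∃ c : ℝ, ∀ n : ℕ, 1 ≤ n → ∀ x : ℝ, 0 < x →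
      (P {ω | x < ∑ i ∈ Finset.range n, Y i ω}).toReal ≤ c * n * x ^ (-γ) := by
  have h1γ : (0:ℝ) < 1 - γ := by linarith
  have hx₀γ : (0:ℝ) < x₀ ^ γ := Real.rpow_pos_of_pos hx₀ γ
  refine ⟨C₀ + x₀ ^ γ + C₀ / (1 - γ), fun n hn x hx => ?_⟩
  set c : ℝ := C₀ + x₀ ^ γ + C₀ / (1 - γ) with hc
  have hcpos : 0 < c := by positivity
  have hxγ : (0:ℝ) < x ^ (-γ) := Real.rpow_pos_of_pos hx _
  have hn1 : (1:ℝ) ≤ (n:ℝ) := by exact_mod_cast hn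
  by_cases hxx : x₀ ≤ x
  · -- main case
    -- tail bound in ENNReal
    have htail' : ∀ t : ℝ, x₀ ≤ t →
        P {ω | t < Y 0 ω} ≤ ENNReal.ofReal (C₀ * t ^ (-γ)) := fun t ht =>
      (ENNReal.le_ofReal_iff_toReal_le (measure_ne_top P _)
        (mul_nonneg hC₀.le (Real.rpow_nonneg (by linarith) _))).mpr (htail t ht)
    -- identical distribution of tails
    have h1 : ∀ i, P {ω | x < Y i ω} = P {ω | x < Y 0 ω} := by
      intro i
      have e1 : P {ω | x < Y i ω} = (P.map (Y i)) (Set.Ioi x) := by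
        rw [Measure.map_apply (hmeas i) measurableSet_Ioi]; rfl
      rw [e1, hident i, Measure.map_apply (hmeas 0) measurableSet_Ioi]; rfl
    -- decomposition
    have hsub : {ω | x < ∑ i ∈ Finset.range n, Y i ω} ⊆
        (⋃ i ∈ Finset.range n, {ω | x < Y i ω}) ∪
          {ω | x < ∑ i ∈ Finset.range n, min (Y i ω) x} := by
      intro ω hω
      by_cases h : ∀ i ∈ Finset.range n, Y i ω ≤ x
      · right
        have e : ∑ i ∈ Finset.range n, min (Y i ω) x = ∑ i ∈ Finset.range n, Y i ω :=
          Finset.sum_congr rfl fun i hi => min_eq_left (h i hi)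
        simpa only [Set.mem_setOf_eq, e] using hω
      · left
        push_neg at h
        obtain ⟨i, hi, hle⟩ := h
        exact Set.mem_biUnion hi hle
    -- truncated integral bound
    set B : ℝ := x₀ + C₀ / (1 - γ) * x ^ (1 - γ) with hB
    have hIbound : ∫⁻ ω, ENNReal.ofReal (min (Y 0 ω) x) ∂P ≤ ENNReal.ofReal B := by
      have nn : 0 ≤ᵐ[P] fun ω => min (Y 0 ω) x :=
        (hpos 0).mono fun ω h => le_min h.le hx.le
      rw [lintegral_eq_lintegral_meas_lt P nn ((hmeas 0).min measurable_const).aemeasurable]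
      have hs1 : Set.Ioi (0:ℝ) = Set.Ioc 0 x ∪ Set.Ioi x := (Set.Ioc_union_Ioi_eq_Ioi hx.le).symm
      rw [hs1, lintegral_union measurableSet_Ioi Set.Ioc_disjoint_Ioi_same]
      have h2 : ∫⁻ t in Set.Ioi x, P {ω | t < min (Y 0 ω) x} = 0 := by
        rw [setLIntegral_congr_fun measurableSet_Ioi
          (fun t (ht : x < t) => ?_), lintegral_zero]
        have he : {ω | t < min (Y 0 ω) x} = ∅ := by
          ext ω
          simp only [Set.mem_setOf_eq, Set.mem_empty_iff_false, iff_false, not_lt]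
          exact le_trans (min_le_right _ _) ht.le
        rw [he, measure_empty]
      rw [h2, add_zero]
      have hs2 : Set.Ioc (0:ℝ) x = Set.Ioc 0 x₀ ∪ Set.Ioc x₀ x :=
        (Set.Ioc_union_Ioc_eq_Ioc hx₀.le hxx).symm
      rw [hs2, lintegral_union measurableSet_Ioc (Set.Ioc_disjoint_Ioc_of_le le_rfl)]
      have hA : ∫⁻ t in Set.Ioc (0:ℝ) x₀, P {ω | t < min (Y 0 ω) x} ≤ ENNReal.ofReal x₀ := by
        calc ∫⁻ t in Set.Ioc (0:ℝ) x₀, P {ω | t < min (Y 0 ω) x}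
            ≤ ∫⁻ _ in Set.Ioc (0:ℝ) x₀, 1 := setLIntegral_mono measurable_const
              (fun t _ => prob_le_one)
          _ = volume (Set.Ioc (0:ℝ) x₀) := setLIntegral_one _
          _ = ENNReal.ofReal x₀ := by rw [Real.volume_Ioc, sub_zero]
      have hBpart : ∫⁻ t in Set.Ioc x₀ x, P {ω | t < min (Y 0 ω) x}
          ≤ ENNReal.ofReal (C₀ / (1 - γ) * x ^ (1 - γ)) := by
        have hmg : Measurable fun t : ℝ => ENNReal.ofReal (C₀ * t ^ (-γ)) := by
          measurability
        have step1 : ∫⁻ t in Set.Ioc x₀ x, P {ω | t < min (Y 0 ω) x}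
            ≤ ∫⁻ t in Set.Ioc x₀ x, ENNReal.ofReal (C₀ * t ^ (-γ)) := by
          refine setLIntegral_mono hmg fun t ht => ?_
          refine le_trans (measure_mono fun ω (h : t < min (Y 0 ω) x) =>
            lt_of_lt_of_le h (min_le_left _ _)) (htail' t ht.1.le)
        have hint : IntegrableOn (fun t : ℝ => C₀ * t ^ (-γ)) (Set.Ioc x₀ x) := by
          have := (intervalIntegral.intervalIntegrable_rpow' (a := x₀) (b := x) (by linarith : (-1:ℝ) < -γ)).const_mul C₀
          rwa [intervalIntegrable_iff_integrableOn_Ioc_of_le hxx] at this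
        have hnn : 0 ≤ᵐ[volume.restrict (Set.Ioc x₀ x)] fun t : ℝ => C₀ * t ^ (-γ) := by
          filter_upwards [ae_restrict_mem measurableSet_Ioc] with t ht
          exact mul_nonneg hC₀.le (Real.rpow_nonneg (by linarith [ht.1]) _)
        have step2 : ∫⁻ t in Set.Ioc x₀ x, ENNReal.ofReal (C₀ * t ^ (-γ))
            = ENNReal.ofReal (∫ t in Set.Ioc x₀ x, C₀ * t ^ (-γ)) :=
          (ofReal_integral_eq_lintegral_ofReal hint hnn).symm
        have hval : ∫ t in Set.Ioc x₀ x, C₀ * t ^ (-γ) ≤ C₀ / (1 - γ) * x ^ (1 - γ) := by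
          have e1 : ∫ t in Set.Ioc x₀ x, C₀ * t ^ (-γ) = ∫ t in x₀..x, C₀ * t ^ (-γ) :=
            (intervalIntegral.integral_of_le hxx).symm
          rw [e1, intervalIntegral.integral_const_mul,
            integral_rpow (Or.inl (by linarith : (-1:ℝ) < -γ))]
          have hxp : (0:ℝ) ≤ x₀ ^ (-γ + 1) := Real.rpow_nonneg hx₀.le _
          have hee : (-γ + 1 : ℝ) = 1 - γ := by ring
          rw [hee]
          have hxp2 : (0:ℝ) ≤ x₀ ^ (1 - γ) := Real.rpow_nonneg hx₀.le _
          have h2 : (x ^ (1 - γ) - x₀ ^ (1 - γ)) / (1 - γ) ≤ x ^ (1 - γ) / (1 - γ) := by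
            gcongr
            linarith
          calc C₀ * ((x ^ (1 - γ) - x₀ ^ (1 - γ)) / (1 - γ))
              ≤ C₀ * (x ^ (1 - γ) / (1 - γ)) := mul_le_mul_of_nonneg_left h2 hC₀.le
            _ = C₀ / (1 - γ) * x ^ (1 - γ) := by ring
        rw [step2] at step1
        exact step1.trans (ENNReal.ofReal_le_ofReal hval)
      refine le_trans (add_le_add hA hBpart) ?_
      rw [← ENNReal.ofReal_add hx₀.le
        (mul_nonneg (by positivity) (Real.rpow_nonneg hx.le _))]
    -- same integral for every i
    have hI : ∫⁻ ω, ∑ i ∈ Finset.range n, ENNReal.ofReal (min (Y i ω) x) ∂P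
        = n * ∫⁻ ω, ENNReal.ofReal (min (Y 0 ω) x) ∂P := by
      rw [lintegral_finset_sum _ fun i _ => ((hmeas i).min measurable_const).ennreal_ofReal]
      have heach : ∀ i, ∫⁻ ω, ENNReal.ofReal (min (Y i ω) x) ∂P
          = ∫⁻ ω, ENNReal.ofReal (min (Y 0 ω) x) ∂P := by
        intro i
        have hm : Measurable fun y : ℝ => ENNReal.ofReal (min y x) :=
          (measurable_id.min measurable_const).ennreal_ofReal
        calc ∫⁻ ω, ENNReal.ofReal (min (Y i ω) x) ∂P
            = ∫⁻ y, ENNReal.ofReal (min y x) ∂(P.map (Y i)) := (lintegral_map hm (hmeas i)).symm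
          _ = ∫⁻ y, ENNReal.ofReal (min y x) ∂(P.map (Y 0)) := by rw [hident i]
          _ = ∫⁻ ω, ENNReal.ofReal (min (Y 0 ω) x) ∂P := lintegral_map hm (hmeas 0)
      rw [Finset.sum_congr rfl fun i _ => heach i, Finset.sum_const, Finset.card_range,
        nsmul_eq_mul]
    -- Markov for the truncated sum
    set g : Ω → ℝ≥0∞ := fun ω => ∑ i ∈ Finset.range n, ENNReal.ofReal (min (Y i ω) x) with hg
    have hmg : Measurable g :=
      Finset.measurable_sum _ fun i _ => ((hmeas i).min measurable_const).ennreal_ofReal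
    have hxne : ENNReal.ofReal x ≠ 0 := by
      simp [ENNReal.ofReal_eq_zero, not_le, hx]
    have hmarkov : P {ω | x < ∑ i ∈ Finset.range n, min (Y i ω) x}
        ≤ (n * ENNReal.ofReal B) / ENNReal.ofReal x := by
      have hsub2 : {ω | x < ∑ i ∈ Finset.range n, min (Y i ω) x}
          ⊆ {ω | ENNReal.ofReal x ≤ g ω} := by
        intro ω hω
        calc ENNReal.ofReal x ≤ ENNReal.ofReal (∑ i ∈ Finset.range n, min (Y i ω) x) :=
              ENNReal.ofReal_le_ofReal (le_of_lt hω)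
          _ ≤ g ω := my_ofReal_sum_le _ _
      calc P {ω | x < ∑ i ∈ Finset.range n, min (Y i ω) x}
          ≤ P {ω | ENNReal.ofReal x ≤ g ω} := measure_mono hsub2
        _ ≤ (∫⁻ ω, g ω ∂P) / ENNReal.ofReal x := by
            rw [ENNReal.le_div_iff_mul_le (Or.inl hxne) (Or.inl ENNReal.ofReal_ne_top), mul_comm]
            exact mul_meas_ge_le_lintegral₀ hmg.aemeasurable _
        _ ≤ (n * ENNReal.ofReal B) / ENNReal.ofReal x := by
            rw [hg, hI]
            exact ENNReal.div_le_div_right (mul_le_mul_right hIbound n) _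
    -- union bound
    have hP : P {ω | x < ∑ i ∈ Finset.range n, Y i ω}
        ≤ n * ENNReal.ofReal (C₀ * x ^ (-γ)) + (n * ENNReal.ofReal B) / ENNReal.ofReal x := by
      calc P {ω | x < ∑ i ∈ Finset.range n, Y i ω}
          ≤ P ((⋃ i ∈ Finset.range n, {ω | x < Y i ω}) ∪
              {ω | x < ∑ i ∈ Finset.range n, min (Y i ω) x}) := measure_mono hsub
        _ ≤ P (⋃ i ∈ Finset.range n, {ω | x < Y i ω})
            + P {ω | x < ∑ i ∈ Finset.range n, min (Y i ω) x} := measure_union_le _ _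
        _ ≤ (∑ i ∈ Finset.range n, P {ω | x < Y i ω})
            + P {ω | x < ∑ i ∈ Finset.range n, min (Y i ω) x} := by
              gcongr
              exact measure_biUnion_finset_le _ _
        _ ≤ n * ENNReal.ofReal (C₀ * x ^ (-γ)) + (n * ENNReal.ofReal B) / ENNReal.ofReal x := by
              refine add_le_add ?_ hmarkov
              calc ∑ i ∈ Finset.range n, P {ω | x < Y i ω}
                  = ∑ _i ∈ Finset.range n, P {ω | x < Y 0 ω} :=
                    Finset.sum_congr rfl fun i _ => h1 i
                _ = n * P {ω | x < Y 0 ω} := by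
                    rw [Finset.sum_const, Finset.card_range, nsmul_eq_mul]
                _ ≤ n * ENNReal.ofReal (C₀ * x ^ (-γ)) :=
                    mul_le_mul_right (htail' x hxx) _
    -- convert to reals
    refine ENNReal.toReal_le_of_le_ofReal (by positivity) (hP.trans ?_)
    have e1 : (n : ℝ≥0∞) * ENNReal.ofReal (C₀ * x ^ (-γ))
        = ENNReal.ofReal ((n : ℝ) * (C₀ * x ^ (-γ))) := by
      rw [← ENNReal.ofReal_natCast n,
        ← ENNReal.ofReal_mul (p := (n:ℝ)) (by positivity)]
    have e2 : (n : ℝ≥0∞) * ENNReal.ofReal B = ENNReal.ofReal ((n : ℝ) * B) := by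
      rw [← ENNReal.ofReal_natCast n,
        ← ENNReal.ofReal_mul (p := (n:ℝ)) (by positivity)]
    rw [e1, e2, ← ENNReal.ofReal_div_of_pos hx, ← ENNReal.ofReal_add (by positivity)]
    · refine ENNReal.ofReal_le_ofReal ?_
      have hxpow : x ^ (1 - γ) = x ^ (-γ) * x := by
        have h := Real.rpow_add hx (-γ) 1
        rw [Real.rpow_one] at h
        rw [show (1 - γ : ℝ) = -γ + 1 by ring, h]
      have hx0le : x₀ ≤ x₀ ^ γ * (x ^ (-γ) * x) := by
        have h1 : x₀ ^ (1 - γ) ≤ x ^ (1 - γ) := Real.rpow_le_rpow hx₀.le hxx (by linarith)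
        have h2 : x₀ ^ γ * x₀ ^ (1 - γ) = x₀ := by
          rw [← Real.rpow_add hx₀, show γ + (1 - γ) = (1:ℝ) by ring, Real.rpow_one]
        nlinarith [Real.rpow_pos_of_pos hx₀ γ]
      have key : (n : ℝ) * B / x ≤ (n : ℝ) * (x₀ ^ γ + C₀ / (1 - γ)) * x ^ (-γ) := by
        rw [div_le_iff₀ hx, hB, hxpow]
        have hCγ : (0:ℝ) ≤ C₀ / (1 - γ) := by positivity
        nlinarith [mul_le_mul_of_nonneg_left hx0le (by linarith : (0:ℝ) ≤ (n:ℝ))]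
      have : c * n * x ^ (-γ) = (n:ℝ) * (C₀ * x ^ (-γ)) + (n:ℝ) * (x₀ ^ γ + C₀ / (1 - γ)) * x ^ (-γ) := by
        rw [hc]; ring
      linarith
    · positivity
  · -- small x: trivial bound by 1
    push_neg at hxx
    have h1 : (P {ω | x < ∑ i ∈ Finset.range n, Y i ω}).toReal ≤ 1 := by
      have := prob_le_one (μ := P) (s := {ω | x < ∑ i ∈ Finset.range n, Y i ω})
      simpa using ENNReal.toReal_mono (by simp) this
    refine h1.trans ?_
    have hpow : x ^ γ * x ^ (-γ) = 1 := by
      rw [← Real.rpow_add hx, show γ + -γ = (0:ℝ) by ring, Real.rpow_zero]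
    have hle : x ^ γ ≤ x₀ ^ γ := Real.rpow_le_rpow hx.le hxx.le hγ0.le
    have hxγpos : 0 < x ^ γ := Real.rpow_pos_of_pos hx γ
    have h2 : 1 ≤ x₀ ^ γ * x ^ (-γ) := by
      calc (1:ℝ) = x ^ γ * x ^ (-γ) := hpow.symm
        _ ≤ x₀ ^ γ * x ^ (-γ) := mul_le_mul_of_nonneg_right hle hxγ.le
    have h3 : x₀ ^ γ ≤ c * n := by
      have hcx : x₀ ^ γ ≤ c := by
        have hpos2 : 0 < C₀ / (1 - γ) := by positivity
        rw [hc]; linarith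
      calc x₀ ^ γ ≤ c := hcx
        _ = c * 1 := (mul_one c).symm
        _ ≤ c * n := mul_le_mul_of_nonneg_left hn1 hcpos.le
    exact le_trans h2 (mul_le_mul_of_nonneg_right h3 hxγ.le)
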